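/- For a word v = z_{k_1}⋯z_{k_d} with k_1+⋯+k_d = k, and the weighted sum Q_l as defined below, one has (l−1)·Q_l(v) = Q_{l−1}(∂(v)) for every l ≥ 1, where ∂(z_{k_1}⋯z_{k_d}) = ∑_a k_a z_{k_1}⋯z_{k_a+1}⋯z_{k_d}. -/

import Mathlib

open Classical in
/-- Multiple zeta value with strict lower bound `m`:
`∑_{m<m₁<⋯<m_d} ∏ 1/mᵢ^{kᵢ}` (interpreted as a `tsum`). -/
noncomputable def mzvFrom : List ℕ → ℕ → ℝ
  | [], _ => 1
  | k :: ks, m => ∑' n : {n : ℕ // m < n}, (1 / ((n : ℕ) : ℝ) ^ k) * mzvFrom ks (n : ℕ)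

/-- The multiple zeta value `ζ(k₁,…,k_d) = ∑_{0<m₁<⋯<m_d} ∏ 1/mᵢ^{kᵢ}`. -/
noncomputable def mzv (ks : List ℕ) : ℝ := mzvFrom ks 0

open Classical in
/-- The weighted sum `P_l(n;k) = ∑_{w admissible, wᵢ ≥ nᵢ, wt(w)=wt(k)+l}
∏ C(wᵢ−nᵢ, kᵢ−1) · ζ(w₁,…,w_d)`. -/
noncomputable def Psum (l : ℕ) {d : ℕ} (n k : Fin (d + 1) → ℕ) : ℝ :=
  ∑ w : Fin (d + 1) → Fin ((∑ i, k i) + l + 1),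
    if (∀ i, n i ≤ (w i : ℕ)) ∧ 2 ≤ (w (Fin.last d) : ℕ) ∧
        (∑ i, (w i : ℕ)) = (∑ i, k i) + l then
      (∏ i, (Nat.choose ((w i : ℕ) - n i) (k i - 1) : ℝ)) *
        mzv (List.ofFn fun i => (w i : ℕ))
    else 0

/-- `P_l(k) = P_l((1,…,1); k)`. -/
noncomputable def Pl (l : ℕ) {d : ℕ} (k : Fin (d + 1) → ℕ) : ℝ :=
  Psum l (fun _ => 1) k

/-- `Q_l(k) = P_l((1,…,1,2); k)`. -/
noncomputable def Ql (l : ℕ) {d : ℕ} (k : Fin (d + 1) → ℕ) : ℝ :=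
  Psum l (Function.update (fun _ => (1 : ℕ)) (Fin.last d) 2) k


/-- Lemma 4.10 (iii): for `l ≥ 1` and a word `v = z_{k₁}⋯z_{k_d}`,
`(l−1)·Q_l(v) = Q_{l−1}(∂(v))`, where
`∂(z_{k₁}⋯z_{k_d}) = ∑_a k_a z_{k₁}⋯z_{k_a+1}⋯z_{k_d}`. -/
lemma key_choose (m k : ℕ) (hk : 1 ≤ k) :
    (k : ℝ) * (Nat.choose m k) = ((m : ℝ) - k + 1) * (Nat.choose m (k - 1)) := by
  rcases le_or_gt (k - 1) m with h | h
  · have h1 : Nat.choose m k * k = Nat.choose m (k - 1) * (m - (k - 1)) := by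
      conv_lhs => rw [show k = (k - 1) + 1 from (Nat.succ_pred_eq_of_pos hk).symm]
      exact Nat.choose_succ_right_eq m (k - 1)
    have h2 : ((m - (k - 1) : ℕ) : ℝ) = (m : ℝ) - k + 1 := by
      rw [Nat.cast_sub h, Nat.cast_sub hk]; push_cast; ring
    have := congrArg (fun x : ℕ => (x : ℝ)) h1
    push_cast at this
    rw [Nat.cast_sub h, Nat.cast_sub hk] at this
    push_cast at this
    nlinarith [this]
  · have h2 : Nat.choose m (k - 1) = 0 := Nat.choose_eq_zero_of_lt h
    have h3 : Nat.choose m k = 0 := Nat.choose_eq_zero_of_lt (lt_of_lt_of_le h (Nat.sub_le k 1))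
    simp [h2, h3]

theorem Ql_der_identity (l d : ℕ) (hl : 1 ≤ l) (k : Fin (d + 1) → ℕ)
    (hk : ∀ i, 1 ≤ k i) :
    ((l : ℝ) - 1) * Ql l k =
      ∑ a : Fin (d + 1), (k a : ℝ) * Ql (l - 1) (Function.update k a (k a + 1)) := by
  set n : Fin (d + 1) → ℕ := Function.update (fun _ => (1 : ℕ)) (Fin.last d) 2 with hn
  have hsumn : ∑ i, n i = d + 2 := by
    rw [hn, Finset.sum_update_of_mem (Finset.mem_univ _)]
    simp [Finset.sum_const, Finset.sdiff_singleton_eq_erase, Finset.card_erase_of_mem]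
    omega
  have hsumup : ∀ a : Fin (d + 1), ∑ i, Function.update k a (k a + 1) i = (∑ i, k i) + 1 := by
    intro a
    rw [Finset.sum_update_of_mem (Finset.mem_univ a), Finset.sdiff_singleton_eq_erase,
      ← Finset.add_sum_erase _ k (Finset.mem_univ a)]
    ring
  set N := (∑ i, k i) + l + 1 with hN
  have hNa : ∀ a : Fin (d + 1),
      (∑ i, Function.update k a (k a + 1) i) + (l - 1) + 1 = N := by
    intro a; rw [hsumup]; omega
  have hRHS : ∀ a : Fin (d + 1), Ql (l - 1) (Function.update k a (k a + 1)) =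
      ∑ w : Fin (d + 1) → Fin N,
        if (∀ i, n i ≤ (w i : ℕ)) ∧ 2 ≤ (w (Fin.last d) : ℕ) ∧
            (∑ i, (w i : ℕ)) = (∑ i, k i) + l then
          (∏ i, (Nat.choose ((w i : ℕ) - n i) (Function.update k a (k a + 1) i - 1) : ℝ)) *
            mzv (List.ofFn fun i => (w i : ℕ))
        else 0 := by
    intro a
    rw [Ql, Psum]
    refine Fintype.sum_equiv (Equiv.piCongrRight fun _ => finCongr (hNa a)) _ _ ?_
    intro w
    have hco : ∀ i, (((Equiv.piCongrRight fun _ => finCongr (hNa a)) w i : Fin N) : ℕ)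
        = (w i : ℕ) := by intro i; simp
    have hs : (∑ i, Function.update k a (k a + 1) i) + (l - 1) = (∑ i, k i) + l := by
      rw [hsumup]; omega
    simp only [hco, hs, hn]
  calc ((l : ℝ) - 1) * Ql l k
      = ∑ w : Fin (d + 1) → Fin N, ((l : ℝ) - 1) *
          (if (∀ i, n i ≤ (w i : ℕ)) ∧ 2 ≤ (w (Fin.last d) : ℕ) ∧
              (∑ i, (w i : ℕ)) = (∑ i, k i) + l then
            (∏ i, (Nat.choose ((w i : ℕ) - n i) (k i - 1) : ℝ)) *
              mzv (List.ofFn fun i => (w i : ℕ))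
          else 0) := by
        rw [Ql, Psum, Finset.mul_sum]
    _ = ∑ a : Fin (d + 1), (k a : ℝ) * Ql (l - 1) (Function.update k a (k a + 1)) := by
        simp only [hRHS, Finset.mul_sum]
        rw [Finset.sum_comm]
        refine Finset.sum_congr rfl fun w _ => ?_
        by_cases hc : (∀ i, n i ≤ (w i : ℕ)) ∧ 2 ≤ (w (Fin.last d) : ℕ) ∧
            (∑ i, (w i : ℕ)) = (∑ i, k i) + l
        · rw [if_pos hc]
          simp only [if_pos hc]
          -- pointwise coefficient identity
          set Z := mzv (List.ofFn fun i => (w i : ℕ)) with hZ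
          set m : Fin (d + 1) → ℕ := fun i => (w i : ℕ) - n i with hm
          have hprod : ∀ a : Fin (d + 1),
              (∏ i, (Nat.choose (m i) (Function.update k a (k a + 1) i - 1) : ℝ))
              = (Nat.choose (m a) (k a) : ℝ) *
                  ∏ i ∈ Finset.univ.erase a, (Nat.choose (m i) (k i - 1) : ℝ) := by
            intro a
            have : (fun i => (Nat.choose (m i) (Function.update k a (k a + 1) i - 1) : ℝ))
                = Function.update (fun i => (Nat.choose (m i) (k i - 1) : ℝ)) a
                    (Nat.choose (m a) (k a) : ℝ) := by
              funext i
              by_cases hia : i = a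
              · subst hia; simp
              · simp [Function.update_of_ne hia]
            rw [this, Finset.prod_update_of_mem (Finset.mem_univ a),
              Finset.sdiff_singleton_eq_erase]
          have hterm : ∀ a : Fin (d + 1),
              (k a : ℝ) * ((∏ i, (Nat.choose (m i) (Function.update k a (k a + 1) i - 1) : ℝ)) * Z)
              = (((w a : ℕ) : ℝ) - n a - k a + 1) *
                  ((∏ i, (Nat.choose (m i) (k i - 1) : ℝ)) * Z) := by
            intro a
            rw [hprod a, ← Finset.mul_prod_erase _ (fun i => (Nat.choose (m i) (k i - 1) : ℝ))
              (Finset.mem_univ a)]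
            have hkey := key_choose (m a) (k a) (hk a)
            have hma : ((m a : ℕ) : ℝ) = ((w a : ℕ) : ℝ) - n a := by
              rw [hm]; rw [Nat.cast_sub (hc.1 a)]
            rw [hma] at hkey
            linear_combination ((∏ i ∈ Finset.univ.erase a,
              (Nat.choose (m i) (k i - 1) : ℝ)) * Z) * hkey
          simp only [hm] at hterm
          simp only [hterm]
          rw [← Finset.sum_mul]
          congr 1
          have h1 : (∑ a, (((w a : ℕ) : ℝ))) = ((∑ i, k i : ℕ) : ℝ) + l := by
            rw [← Nat.cast_sum, hc.2.2]; push_cast; ring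
          have h2 : (∑ a, ((n a : ℕ) : ℝ)) = (d : ℝ) + 2 := by
            rw [← Nat.cast_sum, hsumn]; push_cast; ring
          have h3 : ∑ a : Fin (d + 1), (((w a : ℕ) : ℝ) - n a - k a + 1)
              = (∑ a, (((w a : ℕ) : ℝ))) - (∑ a, ((n a : ℕ) : ℝ))
                - (∑ a, ((k a : ℕ) : ℝ)) + (d + 1) := by
            rw [Finset.sum_add_distrib, Finset.sum_sub_distrib, Finset.sum_sub_distrib,
              Finset.sum_const, Finset.card_univ, Fintype.card_fin]
            ring
          rw [h3, h1, h2]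
          push_cast
          ring
        · rw [if_neg hc]
          simp only [if_neg hc]
          simp
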